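/- If δ = 0, ε > 0, ‖x‖ > ε, x is (φ,ε,0)-feasible, and the open ball B(x,ε) is disjoint from image(φ), then Λ_0(φ,x,ε) = ∅. -/

import Mathlib

open scoped ENNReal RealInnerProductSpace Pointwise
open Metric Set

noncomputable section

variable {H : Type*} [NormedAddCommGroup H] [InnerProductSpace ℝ H]

/-- Feasible pairs `(𝔠, f)` of the linear inverse problem `LIP(φ, x, ε, δ)`:
`(c f)^(1/p) ≤ 𝔠` and `‖x - φ f‖ ≤ ε + δ 𝔠`. -/
def lipFeas (K : ℕ) (p : ℝ) (c : (Fin K → ℝ) → ℝ)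
    (φ : (Fin K → ℝ) →ₗ[ℝ] H) (x : H) (ε δ : ℝ) : Set (ℝ × (Fin K → ℝ)) :=
  {cf | c cf.2 ^ (1 / p) ≤ cf.1 ∧ ‖x - φ cf.2‖ ≤ ε + δ * cf.1}

/-- The optimal value `β(φ,x,ε,δ) ∈ [0,∞]` of `LIP(φ,x,ε,δ)`, i.e. the infimum of `𝔠^p`
over feasible pairs `(𝔠,f)`; it equals `∞` if the problem is infeasible. -/
def lipVal (K : ℕ) (p : ℝ) (c : (Fin K → ℝ) → ℝ)
    (φ : (Fin K → ℝ) →ₗ[ℝ] H) (x : H) (ε δ : ℝ) : ℝ≥0∞ :=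
  sInf ((fun cf : ℝ × (Fin K → ℝ) => ENNReal.ofReal (cf.1 ^ p)) '' lipFeas K p c φ x ε δ)

/-- `E(φ,x,ε,δ)`: the set of `f`-components of optimal solutions of `LIP(φ,x,ε,δ)`. -/
def lipEnc (K : ℕ) (p : ℝ) (c : (Fin K → ℝ) → ℝ)
    (φ : (Fin K → ℝ) →ₗ[ℝ] H) (x : H) (ε δ : ℝ) : Set (Fin K → ℝ) :=
  {f | ∃ 𝔠 : ℝ, (𝔠, f) ∈ lipFeas K p c φ x ε δ ∧
      ENNReal.ofReal (𝔠 ^ p) = lipVal K p c φ x ε δ}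

/-- The set `S_δ(φ,1) = {z : ∃ f, c f ≤ 1 ∧ ‖z - φ f‖ ≤ δ}`. -/
def lipSet (K : ℕ) (c : (Fin K → ℝ) → ℝ)
    (φ : (Fin K → ℝ) →ₗ[ℝ] H) (δ : ℝ) : Set H :=
  {z | ∃ f, c f ≤ 1 ∧ ‖z - φ f‖ ≤ δ}

/-- The dual function `‖λ‖'_φ = sup {⟨λ,z⟩ : z ∈ S_δ(φ,1)}`. -/
def lipDual (K : ℕ) (c : (Fin K → ℝ) → ℝ)
    (φ : (Fin K → ℝ) →ₗ[ℝ] H) (δ : ℝ) (l : H) : ℝ :=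
  sSup ((fun z => ⟪l, z⟫) '' lipSet K c φ δ)

/-- The set `Λ_δ(φ,x,ε)` of optimal dual variables: `λ` with `‖λ‖'_φ = 1` and
`⟨λ,x⟩ - ε‖λ‖ = (β(φ,x,ε,δ))^(1/p)`. -/
def lipLambda (K : ℕ) (p : ℝ) (c : (Fin K → ℝ) → ℝ)
    (φ : (Fin K → ℝ) →ₗ[ℝ] H) (x : H) (ε δ : ℝ) : Set H :=
  {l | lipDual K c φ δ l = 1 ∧
      ENNReal.ofReal (⟪l, x⟫ - ε * ‖l‖) = lipVal K p c φ x ε δ ^ (1 / p)}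

/-- If `δ = 0`, `ε > 0`, `‖x‖ > ε`, `x` is `(φ,ε,0)`-feasible, and the
open ball `B(x,ε)` is disjoint from `image φ`, then `Λ_0(φ,x,ε) = ∅`. -/
theorem lambda_empty
    [FiniteDimensional ℝ H]
    (K : ℕ) (p : ℝ) (c : (Fin K → ℝ) → ℝ)
    (φ : (Fin K → ℝ) →ₗ[ℝ] H) (x : H) (ε : ℝ)
    (hp : 0 < p) (hc0 : ∀ f, 0 ≤ c f)
    (hhom : ∀ (α : ℝ) (f : Fin K → ℝ), 0 ≤ α → c (α • f) = α ^ p * c f)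
    (hconv : Convex ℝ {f | c f ≤ 1}) (hcpt : IsCompact {f | c f ≤ 1})
    (hε : 0 < ε) (hx : ε < ‖x‖)
    (hfeas : lipVal K p c φ x ε 0 ≠ ⊤)
    (hdisj : ball x ε ∩ (LinearMap.range φ : Set H) = ∅) :
    lipLambda K p c φ x ε 0 = ∅ := by

  rw [Set.eq_empty_iff_forall_notMem]
  rintro l ⟨hdual, hopt⟩
  classical
  -- cost of zero is zero
  have hc00 : c 0 = 0 := by
    have h := hhom 0 0 le_rfl
    rwa [zero_smul, Real.zero_rpow hp.ne', zero_mul] at h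
  -- bound on the sublevel set
  obtain ⟨M, hM⟩ := hcpt.isBounded.exists_norm_le
  have hM0 : 0 ≤ M := le_trans (norm_nonneg (0 : Fin K → ℝ)) (hM 0 (by simp [hc00]))
  have hφc : Continuous φ := φ.continuous_of_finiteDimensional
  set N : ℝ := ‖LinearMap.toContinuousLinearMap φ‖ with hN
  have hNle : ∀ f, ‖φ f‖ ≤ N * ‖f‖ := fun f => (LinearMap.toContinuousLinearMap φ).le_opNorm f
  -- key facts about feasible points
  have hkey : ∀ q : ℝ × (Fin K → ℝ), q ∈ lipFeas K p c φ x ε 0 →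
      0 < q.1 ∧ c (q.1⁻¹ • q.2) ≤ 1 ∧ ‖x - φ q.2‖ ≤ ε := by
    rintro ⟨𝔠, f⟩ ⟨h1, h2⟩
    simp only at h1 h2 ⊢
    have h2' : ‖x - φ f‖ ≤ ε := by linarith
    have h𝔠0 : 0 ≤ 𝔠 := le_trans (Real.rpow_nonneg (hc0 f) _) h1
    have hcf : c f ≤ 𝔠 ^ p := by
      have h3 : (c f ^ (1/p)) ^ p ≤ 𝔠 ^ p :=
        Real.rpow_le_rpow (Real.rpow_nonneg (hc0 f) _) h1 hp.le
      rwa [← Real.rpow_mul (hc0 f), one_div_mul_cancel hp.ne', Real.rpow_one] at h3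
    have h𝔠pos : 0 < 𝔠 := by
      rcases h𝔠0.lt_or_eq with h | h
      · exact h
      · exfalso
        have hcf0 : c f = 0 := by
          refine le_antisymm ?_ (hc0 f)
          rw [← h, Real.zero_rpow hp.ne'] at hcf
          exact hcf
        have hf0 : f = 0 := by
          by_contra hf
          have hfn : 0 < ‖f‖ := norm_pos_iff.mpr hf
          have hmem : ((M + 1)/‖f‖) • f ∈ {f | c f ≤ 1} := by
            have := hhom ((M+1)/‖f‖) f (by positivity)
            simp only [Set.mem_setOf_eq, this, hcf0, mul_zero]
            norm_num
          have hle := hM _ hmem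
          rw [norm_smul, Real.norm_eq_abs, abs_of_pos (by positivity),
            div_mul_cancel₀ _ hfn.ne'] at hle
          linarith
        rw [hf0, map_zero, sub_zero] at h2'
        exact absurd h2' (not_le.mpr hx)
    refine ⟨h𝔠pos, ?_, h2'⟩
    rw [hhom _ _ (inv_nonneg.mpr h𝔠0)]
    calc 𝔠⁻¹ ^ p * c f ≤ 𝔠⁻¹ ^ p * 𝔠 ^ p :=
          mul_le_mul_of_nonneg_left hcf (Real.rpow_nonneg (by positivity) _)
      _ = 1 := by
          rw [← Real.mul_rpow (by positivity) h𝔠0, inv_mul_cancel₀ h𝔠pos.ne',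
            Real.one_rpow]
  -- a feasible point exists
  have hne : (lipFeas K p c φ x ε 0).Nonempty := by
    by_contra h
    rw [Set.not_nonempty_iff_eq_empty] at h
    exact hfeas (by rw [lipVal, h, Set.image_empty, sInf_empty])
  obtain ⟨q0, hq0⟩ := hne
  -- positive lower bound on feasible 𝔠
  have hxε : 0 < ‖x‖ - ε := sub_pos.mpr hx
  have hbound : ∀ q ∈ lipFeas K p c φ x ε 0, ‖x‖ - ε ≤ q.1 * (N * M) := by
    intro q hq
    obtain ⟨h𝔠, hV, hd⟩ := hkey q hq
    have hf : ‖q.2‖ ≤ q.1 * M := by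
      have h5 := hM _ hV
      rw [norm_smul, Real.norm_eq_abs, abs_of_pos (inv_pos.mpr h𝔠)] at h5
      have : ‖q.2‖ = q.1 * (q.1⁻¹ * ‖q.2‖) := by field_simp
      rw [this]
      exact mul_le_mul_of_nonneg_left h5 h𝔠.le
    have hφf : ‖φ q.2‖ ≤ q.1 * (N * M) := by
      calc ‖φ q.2‖ ≤ N * ‖q.2‖ := hNle q.2
        _ ≤ N * (q.1 * M) := mul_le_mul_of_nonneg_left hf (norm_nonneg _)
        _ = q.1 * (N * M) := by ring
    have hxle : ‖x‖ ≤ ε + ‖φ q.2‖ := by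
      calc ‖x‖ = ‖(x - φ q.2) + φ q.2‖ := by rw [sub_add_cancel]
        _ ≤ ‖x - φ q.2‖ + ‖φ q.2‖ := norm_add_le _ _
        _ ≤ ε + ‖φ q.2‖ := by linarith
    linarith
  have hC : 0 < N * M := by
    have h1 := hbound q0 hq0
    have h2 := (hkey q0 hq0).1
    nlinarith
  set r : ℝ := (‖x‖ - ε) / (N * M) with hr
  have hrpos : 0 < r := div_pos hxε hC
  have hrle : ∀ q ∈ lipFeas K p c φ x ε 0, r ≤ q.1 := fun q hq =>
    (div_le_iff₀ hC).mpr (hbound q hq)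
  -- hence a positive lower bound on the optimal value and on b
  have hlow : ENNReal.ofReal (r ^ p) ≤ lipVal K p c φ x ε 0 := by
    apply le_sInf
    rintro a ⟨q, hq, rfl⟩
    exact ENNReal.ofReal_le_ofReal (Real.rpow_le_rpow hrpos.le (hrle q hq) hp.le)
  set b : ℝ := ⟪l, x⟫ - ε * ‖l‖ with hbdef
  have hlowr : ENNReal.ofReal r ≤ ENNReal.ofReal b := by
    calc ENNReal.ofReal r = ENNReal.ofReal (r ^ p) ^ (1/p) := by
          rw [← ENNReal.ofReal_rpow_of_pos hrpos, ← ENNReal.rpow_mul,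
            mul_one_div_cancel hp.ne', ENNReal.rpow_one]
      _ ≤ lipVal K p c φ x ε 0 ^ (1/p) := ENNReal.rpow_le_rpow hlow (by positivity)
      _ = ENNReal.ofReal b := hopt.symm
  have hb0 : 0 < b :=
    ENNReal.ofReal_pos.mp (lt_of_lt_of_le (ENNReal.ofReal_pos.mpr hrpos) hlowr)
  -- orthogonal decomposition of x
  set R : Submodule ℝ H := LinearMap.range φ with hR
  set y : H := (R.orthogonalProjectionOnto x : H) with hy
  set μ : H := x - y with hμdef
  have hyR : y ∈ R := by rw [hy]; exact SetLike.coe_mem _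
  have hμR : μ ∈ Rᗮ := by
    rw [hμdef, hy]; exact Submodule.sub_starProjection_mem_orthogonal (K := R) x
  have hμorth : ∀ z ∈ R, ⟪μ, z⟫ = 0 := by
    intro z hz
    rw [real_inner_comm]
    exact (Submodule.mem_orthogonal R μ).mp hμR z hz
  have hμge : ε ≤ ‖μ‖ := by
    by_contra h
    push_neg at h
    have hmem : y ∈ ball x ε ∩ (R : Set H) := by
      refine ⟨?_, hyR⟩
      rw [mem_ball, dist_eq_norm]
      rw [norm_sub_rev]
      exact h
    rw [hdisj] at hmem
    exact hmem
  have hμle : ‖μ‖ ≤ ε := by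
    obtain ⟨h𝔠, hV, hd⟩ := hkey q0 hq0
    have hw : (y - φ q0.2) ∈ R := R.sub_mem hyR ⟨q0.2, rfl⟩
    have hin : ⟪μ, y - φ q0.2⟫ = 0 := hμorth _ hw
    have hdecomp : x - φ q0.2 = μ + (y - φ q0.2) := by rw [hμdef]; abel
    have hpyth := norm_add_sq_real μ (y - φ q0.2)
    rw [hin] at hpyth
    have h2 : ‖μ‖ ≤ ‖x - φ q0.2‖ := by
      rw [hdecomp]
      nlinarith [norm_nonneg (μ + (y - φ q0.2)), norm_nonneg μ,
        sq_nonneg (‖y - φ q0.2‖)]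
    linarith
  have hμε : ‖μ‖ = ε := le_antisymm hμle hμge
  have hμne : μ ≠ 0 := by
    intro h; rw [h, norm_zero] at hμε; linarith
  have hμx : ⟪μ, x⟫ = ε ^ 2 := by
    have hxd : ⟪μ, x⟫ = ⟪μ, μ⟫ + ⟪μ, y⟫ := by
      rw [← inner_add_right]; congr 1; rw [hμdef]; abel
    rw [hxd, hμorth y hyR, real_inner_self_eq_norm_sq, hμε]
    ring
  -- structure of lipSet for δ = 0
  have hSet : lipSet K c φ 0 = φ '' {f | c f ≤ 1} := by
    ext z
    constructor
    · rintro ⟨f, h1, h2⟩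
      exact ⟨f, h1, (sub_eq_zero.mp (norm_le_zero_iff.mp h2)).symm⟩
    · rintro ⟨f, h1, rfl⟩
      exact ⟨f, h1, by simp⟩
  have hScpt : IsCompact (lipSet K c φ 0) := hSet ▸ hcpt.image hφc
  have hbdd : ∀ w : H, BddAbove ((fun z => ⟪w, z⟫) '' lipSet K c φ 0) := fun w =>
    (hScpt.image (Continuous.inner continuous_const continuous_id)).bddAbove
  have hSsub : ∀ z ∈ lipSet K c φ 0, z ∈ R := by
    rintro z ⟨f, h1, h2⟩
    have hzf : z = φ f := sub_eq_zero.mp (norm_le_zero_iff.mp h2)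
    rw [hzf, hR]
    exact ⟨f, rfl⟩
  have hS0 : (0 : H) ∈ lipSet K c φ 0 := ⟨0, by simp [hc00], by simp⟩
  by_cases hray : SameRay ℝ l μ
  · -- if l is on the ray of μ, then its dual norm is 0, not 1
    obtain ⟨a, ha0, hal⟩ := hray.symm.exists_nonneg_left hμne
    have hall : ∀ z ∈ lipSet K c φ 0, ⟪l, z⟫ = 0 := by
      intro z hz
      rw [← hal, real_inner_smul_left, hμorth z (hSsub z hz), mul_zero]
    have himg : (fun z => ⟪l, z⟫) '' lipSet K c φ 0 = {0} := by
      apply Set.Subset.antisymm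
      · rintro _ ⟨z, hz, rfl⟩
        exact hall z hz
      · rintro w hw
        rw [Set.mem_singleton_iff] at hw
        exact ⟨0, hS0, by simp [hw]⟩
    rw [lipDual, himg, csSup_singleton] at hdual
    exact absurd hdual (by norm_num)
  · -- otherwise l + μ is a strictly better dual point, contradiction
    set l' : H := l + μ with hl'
    have hdual' : lipDual K c φ 0 l' = 1 := by
      rw [← hdual, lipDual, lipDual]
      congr 1
      apply Set.image_congr
      intro z hz
      rw [hl', inner_add_left, hμorth z (hSsub z hz), add_zero]
    set v : ℝ := ⟪l', x⟫ - ε * ‖l'‖ with hv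
    have hlt : ‖l'‖ < ‖l‖ + ε := by
      have hnrm : ‖l + μ‖ ≠ ‖l‖ + ‖μ‖ := fun h => hray (sameRay_iff_norm_add.mpr h)
      have htri := norm_add_le l μ
      rw [hμε] at htri hnrm
      exact lt_of_le_of_ne htri hnrm
    have hbv : b < v := by
      have hlx : ⟪l', x⟫ = ⟪l, x⟫ + ε ^ 2 := by
        rw [hl', inner_add_left, hμx]
      have hmul : ε * ‖l'‖ < ε * (‖l‖ + ε) := mul_lt_mul_of_pos_left hlt hε
      rw [hv, hlx, hbdef]
      nlinarith
    have hv0 : 0 < v := lt_trans hb0 hbv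
    -- weak duality: v ≤ 𝔠 for every feasible 𝔠
    have hwd : ∀ q ∈ lipFeas K p c φ x ε 0, v ≤ q.1 := by
      intro q hq
      obtain ⟨h𝔠, hV, hd⟩ := hkey q hq
      have hz : φ (q.1⁻¹ • q.2) ∈ lipSet K c φ 0 := ⟨q.1⁻¹ • q.2, hV, by simp⟩
      have h1 : ⟪l', φ (q.1⁻¹ • q.2)⟫ ≤ 1 := by
        rw [← hdual']
        exact le_csSup (hbdd l') ⟨_, hz, rfl⟩
      have h2 : ⟪l', φ q.2⟫ ≤ q.1 := by
        rw [map_smul, real_inner_smul_right] at h1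
        have := (inv_mul_le_one₀ h𝔠).mp h1
        exact this
      have h3 : ⟪l', x⟫ = ⟪l', x - φ q.2⟫ + ⟪l', φ q.2⟫ := by
        rw [← inner_add_right]; congr 1; abel
      have h4 : ⟪l', x - φ q.2⟫ ≤ ‖l'‖ * ε := by
        calc ⟪l', x - φ q.2⟫ ≤ ‖l'‖ * ‖x - φ q.2‖ := real_inner_le_norm _ _
          _ ≤ ‖l'‖ * ε := mul_le_mul_of_nonneg_left hd (norm_nonneg _)
      rw [hv]
      nlinarith
    have hup : ENNReal.ofReal (v ^ p) ≤ lipVal K p c φ x ε 0 := by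
      apply le_sInf
      rintro a ⟨q, hq, rfl⟩
      exact ENNReal.ofReal_le_ofReal (Real.rpow_le_rpow hv0.le (hwd q hq) hp.le)
    have hfin : ENNReal.ofReal v ≤ ENNReal.ofReal b := by
      calc ENNReal.ofReal v = ENNReal.ofReal (v ^ p) ^ (1/p) := by
            rw [← ENNReal.ofReal_rpow_of_pos hv0, ← ENNReal.rpow_mul,
              mul_one_div_cancel hp.ne', ENNReal.rpow_one]
        _ ≤ lipVal K p c φ x ε 0 ^ (1/p) := ENNReal.rpow_le_rpow hup (by positivity)
        _ = ENNReal.ofReal b := hopt.symm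
    have : v ≤ b := (ENNReal.ofReal_le_ofReal_iff hb0.le).mp hfin
    linarith
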